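/- For closed subspaces X and Y of a Banach space Z (with X, Y nonzero), d(X,Y) = 0 if and only if d(Y,X) = 0. -/
import Mathlib


/-- The distance `d(X,Y) = inf {‖x - y‖ : x ∈ S_X, y ∈ Y}` between subspaces. -/
noncomputable def subspaceDist {Z : Type*} [NormedAddCommGroup Z] [NormedSpace ℂ Z]
    (X Y : Submodule ℂ Z) : ℝ :=
  sInf {r : ℝ | ∃ x ∈ X, ‖x‖ = 1 ∧ ∃ y ∈ Y, r = ‖x - y‖}

lemma subspaceDist_set_nonneg {Z : Type*} [NormedAddCommGroup Z] [NormedSpace ℂ Z]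
    (X Y : Submodule ℂ Z) :
    ∀ r ∈ {r : ℝ | ∃ x ∈ X, ‖x‖ = 1 ∧ ∃ y ∈ Y, r = ‖x - y‖}, (0:ℝ) ≤ r := by
  rintro r ⟨x, hx, hx1, y, hy, rfl⟩
  exact norm_nonneg _

lemma subspaceDist_set_nonempty {Z : Type*} [NormedAddCommGroup Z] [NormedSpace ℂ Z]
    (X Y : Submodule ℂ Z) (hX0 : X ≠ ⊥) :
    {r : ℝ | ∃ x ∈ X, ‖x‖ = 1 ∧ ∃ y ∈ Y, r = ‖x - y‖}.Nonempty := by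
  obtain ⟨x0, hx0X, hx0⟩ := Submodule.exists_mem_ne_zero_of_ne_bot hX0
  refine ⟨‖(((‖x0‖ : ℝ) : ℂ))⁻¹ • x0‖, (((‖x0‖ : ℝ) : ℂ))⁻¹ • x0,
    X.smul_mem _ hx0X, ?_, 0, Y.zero_mem, by rw [sub_zero]⟩
  rw [norm_smul, norm_inv, Complex.norm_real, norm_norm]
  field_simp [norm_ne_zero_iff.mpr hx0]

lemma subspaceDist_zero_imp {Z : Type*} [NormedAddCommGroup Z] [NormedSpace ℂ Z]
    (X Y : Submodule ℂ Z) (hX0 : X ≠ ⊥) (h : subspaceDist X Y = 0) :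
    subspaceDist Y X = 0 := by
  have hbdd : BddBelow {r : ℝ | ∃ x ∈ Y, ‖x‖ = 1 ∧ ∃ y ∈ X, r = ‖x - y‖} :=
    ⟨0, fun r hr => subspaceDist_set_nonneg Y X r hr⟩
  refine le_antisymm ?_ (Real.sInf_nonneg (subspaceDist_set_nonneg Y X))
  · refine le_of_forall_pos_le_add fun ε hε => ?_
    have hδ : (0:ℝ) < min (ε/3) (1/2) := by positivity
    have hlt : sInf {r : ℝ | ∃ x ∈ X, ‖x‖ = 1 ∧ ∃ y ∈ Y, r = ‖x - y‖} < min (ε/3) (1/2) := by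
      rw [show sInf {r : ℝ | ∃ x ∈ X, ‖x‖ = 1 ∧ ∃ y ∈ Y, r = ‖x - y‖} = 0 from h]
      exact hδ
    obtain ⟨r, ⟨x, hxX, hx1, y, hyY, rfl⟩, hr⟩ :=
      exists_lt_of_csInf_lt (subspaceDist_set_nonempty X Y hX0) hlt
    set δ := min (ε/3) (1/2) with hδdef
    have hδε : δ ≤ ε/3 := min_le_left _ _
    have hδhalf : δ ≤ 1/2 := min_le_right _ _
    have hy_lb : 1 - δ ≤ ‖y‖ := by
      have := norm_sub_norm_le x y
      rw [hx1] at this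
      have h2 : ‖x - y‖ < δ := hr
      linarith
    have hy_pos : (0:ℝ) < ‖y‖ := by linarith
    have hy_ne : ‖y‖ ≠ 0 := ne_of_gt hy_pos
    set y' := (((‖y‖ : ℝ) : ℂ))⁻¹ • y with hy'def
    have hy'Y : y' ∈ Y := Y.smul_mem _ hyY
    have hy'1 : ‖y'‖ = 1 := by
      rw [hy'def, norm_smul, norm_inv, Complex.norm_real, norm_norm]
      field_simp
    have hdiff : ‖y' - y‖ = |1 - ‖y‖| := by
      rw [hy'def, show (((‖y‖ : ℝ) : ℂ))⁻¹ • y - y = ((((‖y‖ : ℝ) : ℂ))⁻¹ - 1) • y by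
        rw [sub_smul, one_smul], norm_smul]
      have : ((((‖y‖ : ℝ) : ℂ))⁻¹ - 1) = (((‖y‖⁻¹ - 1 : ℝ)) : ℂ) := by push_cast; ring
      rw [this, Complex.norm_real, Real.norm_eq_abs]
      have hmul : (‖y‖⁻¹ - 1) * ‖y‖ = 1 - ‖y‖ := by field_simp
      calc |‖y‖⁻¹ - 1| * ‖y‖ = |(‖y‖⁻¹ - 1) * ‖y‖| := by
              rw [abs_mul, abs_of_pos hy_pos]
        _ = |1 - ‖y‖| := by rw [hmul]
    have hnorm_close : |1 - ‖y‖| ≤ ‖x - y‖ := by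
      have := abs_norm_sub_norm_le x y
      rw [hx1] at this
      exact this
    have hkey : ‖y' - x‖ ≤ ‖y' - y‖ + ‖y - x‖ := norm_sub_le_norm_sub_add_norm_sub _ _ _
    have hyx : ‖y - x‖ = ‖x - y‖ := norm_sub_rev _ _
    have hle : ‖y' - x‖ < 2 * δ := by
      rw [hdiff, hyx] at hkey
      have h2 : ‖x - y‖ < δ := hr
      linarith
    calc sInf {r : ℝ | ∃ x ∈ Y, ‖x‖ = 1 ∧ ∃ y ∈ X, r = ‖x - y‖}
        ≤ ‖y' - x‖ := csInf_le hbdd ⟨y', hy'Y, hy'1, x, hxX, rfl⟩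
      _ ≤ 0 + ε := by linarith

/-- For closed nonzero subspaces `X, Y` of a Banach space `Z`,
`d(X,Y) = 0` iff `d(Y,X) = 0`. -/
theorem subspaceDist_eq_zero_symm {Z : Type*} [NormedAddCommGroup Z] [NormedSpace ℂ Z]
    [CompleteSpace Z] (X Y : Submodule ℂ Z) (hX : IsClosed (X : Set Z))
    (hY : IsClosed (Y : Set Z)) (hX0 : X ≠ ⊥) (hY0 : Y ≠ ⊥) :
    subspaceDist X Y = 0 ↔ subspaceDist Y X = 0 :=
  ⟨subspaceDist_zero_imp X Y hX0, subspaceDist_zero_imp Y X hY0⟩
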